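/- For every odd positive integer i, the element y_1^i + y_2^i + ⋯ + y_n^i is central in the affine Brauer algebra A(n,N). -/

import Mathlib

noncomputable section

open scoped BigOperators

/-- Index type for the generators of the affine Brauer algebra `A(n,N)`:
the generators `s₁,…,s_{n−1}`, `t₁,…,t_{n−1}`, `y₁,…,yₙ` and `w₁, w₂, …`. -/
abbrev AIdx (n : ℕ) := (Fin (n - 1) ⊕ Fin (n - 1)) ⊕ (Fin n ⊕ ℕ)

/-- The generator `s_k` (1-based) in the free algebra. -/
def aS (n : ℕ) (k : ℕ) : FreeAlgebra ℂ (AIdx n) :=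
  if h : 1 ≤ k ∧ k ≤ n - 1 then
    FreeAlgebra.ι ℂ (Sum.inl (Sum.inl ⟨k - 1, by omega⟩)) else 0

/-- The generator `t_k` (1-based) in the free algebra. -/
def aT (n : ℕ) (k : ℕ) : FreeAlgebra ℂ (AIdx n) :=
  if h : 1 ≤ k ∧ k ≤ n - 1 then
    FreeAlgebra.ι ℂ (Sum.inl (Sum.inr ⟨k - 1, by omega⟩)) else 0

/-- The generator `y_k` (1-based) in the free algebra. -/
def aY (n : ℕ) (k : ℕ) : FreeAlgebra ℂ (AIdx n) :=
  if h : 1 ≤ k ∧ k ≤ n then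
    FreeAlgebra.ι ℂ (Sum.inr (Sum.inl ⟨k - 1, by omega⟩)) else 0

/-- The generator `w_i` for `i ≥ 1`, with the convention `w₀ = N`. -/
def aW (n : ℕ) (N : ℂ) (i : ℕ) : FreeAlgebra ℂ (AIdx n) :=
  if 1 ≤ i then FreeAlgebra.ι ℂ (Sum.inr (Sum.inr (i - 1)))
  else algebraMap ℂ (FreeAlgebra ℂ (AIdx n)) N

/-- The defining relations of the affine Brauer algebra `A(n,N)`. -/
inductive AffRel (n : ℕ) (N : ℂ) :
    FreeAlgebra ℂ (AIdx n) → FreeAlgebra ℂ (AIdx n) → Prop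
  | s_sq (k : ℕ) (h : 1 ≤ k ∧ k ≤ n - 1) :
      AffRel n N (aS n k * aS n k) 1
  | t_sq (k : ℕ) (h : 1 ≤ k ∧ k ≤ n - 1) :
      AffRel n N (aT n k * aT n k) (N • aT n k)
  | st (k : ℕ) (h : 1 ≤ k ∧ k ≤ n - 1) :
      AffRel n N (aS n k * aT n k) (aT n k)
  | ts (k : ℕ) (h : 1 ≤ k ∧ k ≤ n - 1) :
      AffRel n N (aT n k * aS n k) (aT n k)
  | braid (k : ℕ) (h : 1 ≤ k ∧ k + 1 ≤ n - 1) :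
      AffRel n N (aS n k * aS n (k+1) * aS n k) (aS n (k+1) * aS n k * aS n (k+1))
  | ttt_lo (k : ℕ) (h : 1 ≤ k ∧ k + 1 ≤ n - 1) :
      AffRel n N (aT n k * aT n (k+1) * aT n k) (aT n k)
  | ttt_hi (k : ℕ) (h : 1 ≤ k ∧ k + 1 ≤ n - 1) :
      AffRel n N (aT n (k+1) * aT n k * aT n (k+1)) (aT n (k+1))
  | stt (k : ℕ) (h : 1 ≤ k ∧ k + 1 ≤ n - 1) :
      AffRel n N (aS n k * aT n (k+1) * aT n k) (aS n (k+1) * aT n k)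
  | tts (k : ℕ) (h : 1 ≤ k ∧ k + 1 ≤ n - 1) :
      AffRel n N (aT n (k+1) * aT n k * aS n (k+1)) (aT n (k+1) * aS n k)
  | ss_comm (k l : ℕ)
      (h : 1 ≤ k ∧ k ≤ n - 1 ∧ 1 ≤ l ∧ l ≤ n - 1 ∧ (k + 1 < l ∨ l + 1 < k)) :
      AffRel n N (aS n k * aS n l) (aS n l * aS n k)
  | ts_comm (k l : ℕ)
      (h : 1 ≤ k ∧ k ≤ n - 1 ∧ 1 ≤ l ∧ l ≤ n - 1 ∧ (k + 1 < l ∨ l + 1 < k)) :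
      AffRel n N (aT n k * aS n l) (aS n l * aT n k)
  | tt_comm (k l : ℕ)
      (h : 1 ≤ k ∧ k ≤ n - 1 ∧ 1 ≤ l ∧ l ≤ n - 1 ∧ (k + 1 < l ∨ l + 1 < k)) :
      AffRel n N (aT n k * aT n l) (aT n l * aT n k)
  | yy_comm (k l : ℕ) (h : 1 ≤ k ∧ k ≤ n ∧ 1 ≤ l ∧ l ≤ n) :
      AffRel n N (aY n k * aY n l) (aY n l * aY n k)
  | ws_comm (i k : ℕ) (h : 1 ≤ i ∧ 1 ≤ k ∧ k ≤ n - 1) :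
      AffRel n N (aW n N i * aS n k) (aS n k * aW n N i)
  | wt_comm (i k : ℕ) (h : 1 ≤ i ∧ 1 ≤ k ∧ k ≤ n - 1) :
      AffRel n N (aW n N i * aT n k) (aT n k * aW n N i)
  | wy_comm (i k : ℕ) (h : 1 ≤ i ∧ 1 ≤ k ∧ k ≤ n) :
      AffRel n N (aW n N i * aY n k) (aY n k * aW n N i)
  | ww_comm (i j : ℕ) (h : 1 ≤ i ∧ 1 ≤ j) :
      AffRel n N (aW n N i * aW n N j) (aW n N j * aW n N i)
  | sy_comm (k l : ℕ)
      (h : 1 ≤ k ∧ k ≤ n - 1 ∧ 1 ≤ l ∧ l ≤ n ∧ l ≠ k ∧ l ≠ k + 1) :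
      AffRel n N (aS n k * aY n l) (aY n l * aS n k)
  | ty_comm (k l : ℕ)
      (h : 1 ≤ k ∧ k ≤ n - 1 ∧ 1 ≤ l ∧ l ≤ n ∧ l ≠ k ∧ l ≠ k + 1) :
      AffRel n N (aT n k * aY n l) (aY n l * aT n k)
  | sy_lo (k : ℕ) (h : 1 ≤ k ∧ k ≤ n - 1) :
      AffRel n N (aS n k * aY n k) (aY n (k+1) * aS n k + aT n k - 1)
  | sy_hi (k : ℕ) (h : 1 ≤ k ∧ k ≤ n - 1) :
      AffRel n N (aS n k * aY n (k+1)) (aY n k * aS n k + 1 - aT n k)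
  | tyy (k : ℕ) (h : 1 ≤ k ∧ k ≤ n - 1) :
      AffRel n N (aT n k * (aY n k + aY n (k+1))) 0
  | yyt (k : ℕ) (h : 1 ≤ k ∧ k ≤ n - 1) :
      AffRel n N ((aY n k + aY n (k+1)) * aT n k) 0
  | tyt (i : ℕ) (h : 1 ≤ i ∧ 1 ≤ n - 1) :
      AffRel n N (aT n 1 * aY n 1 ^ i * aT n 1) (aW n N i * aT n 1)

/-- The affine Brauer algebra `A(n,N)`. -/
abbrev AffineBrauer (n : ℕ) (N : ℂ) := RingQuot (AffRel n N)

/-- The generator `s_k` (1-based) of `A(n,N)`. -/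
def sA (n : ℕ) (N : ℂ) (k : ℕ) : AffineBrauer n N :=
  RingQuot.mkAlgHom ℂ (AffRel n N) (aS n k)

/-- The generator `t_k` (1-based) of `A(n,N)`. -/
def tA (n : ℕ) (N : ℂ) (k : ℕ) : AffineBrauer n N :=
  RingQuot.mkAlgHom ℂ (AffRel n N) (aT n k)

/-- The generator `y_k` (1-based) of `A(n,N)`. -/
def yA (n : ℕ) (N : ℂ) (k : ℕ) : AffineBrauer n N :=
  RingQuot.mkAlgHom ℂ (AffRel n N) (aY n k)

/-- The central generator `w_i` of `A(n,N)` for `i ≥ 1` (with `w₀ = N`). -/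
def wA (n : ℕ) (N : ℂ) (i : ℕ) : AffineBrauer n N :=
  RingQuot.mkAlgHom ℂ (AffRel n N) (aW n N i)

namespace ABH
variable (n : ℕ) (N : ℂ)

lemma q_sy_lo (k : ℕ) (h : 1 ≤ k ∧ k ≤ n - 1) :
    sA n N k * yA n N k = yA n N (k+1) * sA n N k + tA n N k - 1 := by
  simpa only [map_mul, map_add, map_sub, map_one, sA, tA, yA] using
    RingQuot.mkAlgHom_rel ℂ (AffRel.sy_lo k h)

lemma q_sy_hi (k : ℕ) (h : 1 ≤ k ∧ k ≤ n - 1) :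
    sA n N k * yA n N (k+1) = yA n N k * sA n N k + 1 - tA n N k := by
  simpa only [map_mul, map_add, map_sub, map_one, sA, tA, yA] using
    RingQuot.mkAlgHom_rel ℂ (AffRel.sy_hi k h)

lemma q_tyy (k : ℕ) (h : 1 ≤ k ∧ k ≤ n - 1) :
    tA n N k * (yA n N k + yA n N (k+1)) = 0 := by
  simpa only [map_mul, map_add, map_zero, tA, yA] using
    RingQuot.mkAlgHom_rel ℂ (AffRel.tyy k h)

lemma q_yyt (k : ℕ) (h : 1 ≤ k ∧ k ≤ n - 1) :
    (yA n N k + yA n N (k+1)) * tA n N k = 0 := by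
  simpa only [map_mul, map_add, map_zero, tA, yA] using
    RingQuot.mkAlgHom_rel ℂ (AffRel.yyt k h)

lemma q_yy (k l : ℕ) (h : 1 ≤ k ∧ k ≤ n ∧ 1 ≤ l ∧ l ≤ n) :
    yA n N k * yA n N l = yA n N l * yA n N k := by
  simpa only [map_mul, yA] using RingQuot.mkAlgHom_rel ℂ (AffRel.yy_comm k l h)

lemma q_sy_comm (k l : ℕ)
    (h : 1 ≤ k ∧ k ≤ n - 1 ∧ 1 ≤ l ∧ l ≤ n ∧ l ≠ k ∧ l ≠ k + 1) :
    sA n N k * yA n N l = yA n N l * sA n N k := by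
  simpa only [map_mul, sA, yA] using RingQuot.mkAlgHom_rel ℂ (AffRel.sy_comm k l h)

lemma q_ty_comm (k l : ℕ)
    (h : 1 ≤ k ∧ k ≤ n - 1 ∧ 1 ≤ l ∧ l ≤ n ∧ l ≠ k ∧ l ≠ k + 1) :
    tA n N k * yA n N l = yA n N l * tA n N k := by
  simpa only [map_mul, tA, yA] using RingQuot.mkAlgHom_rel ℂ (AffRel.ty_comm k l h)

lemma q_wy_comm (m k : ℕ) (h : 1 ≤ m ∧ 1 ≤ k ∧ k ≤ n) :
    wA n N m * yA n N k = yA n N k * wA n N m := by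
  simpa only [map_mul, wA, yA] using RingQuot.mkAlgHom_rel ℂ (AffRel.wy_comm m k h)

lemma negmul (x y : AffineBrauer n N) : -x * y = -(x * y) := neg_mul x y

lemma mulneg (x y : AffineBrauer n N) : x * -y = -(x * y) := mul_neg x y

section PairK

variable {k : ℕ}

local notation "s" => sA n N k
local notation "t" => tA n N k
local notation "a" => yA n N k
local notation "b" => yA n N (k+1)

lemma ab_comm (hk : 1 ≤ k ∧ k ≤ n - 1) : Commute (yA n N k) (yA n N (k+1)) :=
  q_yy n N k (k+1) (by omega)

lemma ta_eq (hk : 1 ≤ k ∧ k ≤ n - 1) : t * a = -(t * b) := by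
  have h := q_tyy n N k hk
  rw [mul_add] at h
  exact eq_neg_of_add_eq_zero_left h

lemma at_eq (hk : 1 ≤ k ∧ k ≤ n - 1) : a * t = -(b * t) := by
  have h := q_yyt n N k hk
  rw [add_mul] at h
  exact eq_neg_of_add_eq_zero_left h

lemma t_pow_a (hk : 1 ≤ k ∧ k ≤ n - 1) (m : ℕ) :
    t * a ^ m = ((-1 : ℂ) ^ m) • (t * b ^ m) := by
  induction m with
  | zero => simp
  | succ m ih =>
      have hab := ((ab_comm n N hk).symm.pow_left m).eq
      calc t * a ^ (m+1) = (t * a ^ m) * a := by rw [mul_assoc, ← pow_succ]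
        _ = ((-1 : ℂ) ^ m) • (t * (b ^ m * a)) := by rw [ih, smul_mul_assoc, mul_assoc]
        _ = ((-1 : ℂ) ^ m) • ((t * a) * b ^ m) := by rw [hab, ← mul_assoc]
        _ = ((-1 : ℂ) ^ m) • ((-(t * b)) * b ^ m) := by rw [ta_eq n N hk]
        _ = ((-1 : ℂ) ^ (m+1)) • (t * b ^ (m+1)) := by
              rw [pow_succ (-1 : ℂ) m, mul_smul, neg_one_smul]
              congr 1
              rw [pow_succ', negmul, mul_assoc]
  
lemma pow_a_t (hk : 1 ≤ k ∧ k ≤ n - 1) (m : ℕ) :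
    a ^ m * t = ((-1 : ℂ) ^ m) • (b ^ m * t) := by
  induction m with
  | zero => simp
  | succ m ih =>
      have hab := ((ab_comm n N hk).pow_right m).eq
      calc a ^ (m+1) * t = a * (a ^ m * t) := by rw [← mul_assoc, ← pow_succ']
        _ = ((-1 : ℂ) ^ m) • ((a * b ^ m) * t) := by rw [ih, mul_smul_comm, mul_assoc]
        _ = ((-1 : ℂ) ^ m) • (b ^ m * (a * t)) := by rw [hab, mul_assoc]
        _ = ((-1 : ℂ) ^ m) • (b ^ m * (-(b * t))) := by rw [at_eq n N hk]
        _ = ((-1 : ℂ) ^ (m+1)) • (b ^ (m+1) * t) := by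
              rw [pow_succ (-1 : ℂ) m, mul_smul, neg_one_smul]
              congr 1
              rw [pow_succ, mulneg, ← mul_assoc]

lemma s_pow_a (hk : 1 ≤ k ∧ k ≤ n - 1) (m : ℕ) :
    s * a ^ m = b ^ m * s + ∑ j ∈ Finset.range m, b ^ j * (t - 1) * a ^ (m - 1 - j) := by
  induction m with
  | zero => simp
  | succ m ih =>
      calc s * a ^ (m+1) = (s * a ^ m) * a := by rw [mul_assoc, ← pow_succ]
        _ = b ^ m * (s * a) + (∑ j ∈ Finset.range m, b ^ j * (t - 1) * a ^ (m - 1 - j)) * a := by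
              rw [ih]; noncomm_ring
        _ = b ^ m * (b * s + (t - 1)) +
            ∑ j ∈ Finset.range m, b ^ j * (t - 1) * (a ^ (m - 1 - j) * a) := by
              rw [q_sy_lo n N k hk, Finset.sum_mul]
              simp only [mul_assoc]
              noncomm_ring
        _ = b ^ (m+1) * s + (∑ j ∈ Finset.range m, b ^ j * (t - 1) * a ^ (m - j)
              + b ^ m * (t - 1) * a ^ (m - m)) := by
              rw [pow_succ]
              have : ∀ j ∈ Finset.range m, b ^ j * (t - 1) * (a ^ (m - 1 - j) * a)
                  = b ^ j * (t - 1) * a ^ (m - j) := by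
                intro j hj
                have hj' : j < m := Finset.mem_range.mp hj
                rw [← pow_succ]
                congr 2
                omega
              rw [Finset.sum_congr rfl this]
              simp only [Nat.sub_self, pow_zero, mul_one]
              noncomm_ring
        _ = b ^ (m+1) * s + ∑ j ∈ Finset.range (m+1), b ^ j * (t - 1) * a ^ (m + 1 - 1 - j) := by
              rw [Finset.sum_range_succ]
              simp

lemma s_pow_b (hk : 1 ≤ k ∧ k ≤ n - 1) (m : ℕ) :
    s * b ^ m = a ^ m * s + ∑ j ∈ Finset.range m, a ^ j * (1 - t) * b ^ (m - 1 - j) := by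
  induction m with
  | zero => simp
  | succ m ih =>
      calc s * b ^ (m+1) = (s * b ^ m) * b := by rw [mul_assoc, ← pow_succ]
        _ = a ^ m * (s * b) + (∑ j ∈ Finset.range m, a ^ j * (1 - t) * b ^ (m - 1 - j)) * b := by
              rw [ih]; noncomm_ring
        _ = a ^ m * (a * s + (1 - t)) +
            ∑ j ∈ Finset.range m, a ^ j * (1 - t) * (b ^ (m - 1 - j) * b) := by
              rw [q_sy_hi n N k hk, Finset.sum_mul]
              simp only [mul_assoc]
              noncomm_ring
        _ = a ^ (m+1) * s + (∑ j ∈ Finset.range m, a ^ j * (1 - t) * b ^ (m - j)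
              + a ^ m * (1 - t) * b ^ (m - m)) := by
              rw [pow_succ]
              have : ∀ j ∈ Finset.range m, a ^ j * (1 - t) * (b ^ (m - 1 - j) * b)
                  = a ^ j * (1 - t) * b ^ (m - j) := by
                intro j hj
                have hj' : j < m := Finset.mem_range.mp hj
                rw [← pow_succ]
                congr 2
                omega
              rw [Finset.sum_congr rfl this]
              simp only [Nat.sub_self, pow_zero, mul_one]
              noncomm_ring
        _ = a ^ (m+1) * s + ∑ j ∈ Finset.range (m+1), a ^ j * (1 - t) * b ^ (m + 1 - 1 - j) := by
              rw [Finset.sum_range_succ]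
              simp

lemma mulsub (x y z : AffineBrauer n N) : x * (y - z) = x * y - x * z := mul_sub x y z

lemma submul (x y z : AffineBrauer n N) : (x - y) * z = x * z - y * z := sub_mul x y z

lemma negsmul (x : AffineBrauer n N) : (-1 : ℂ) • x = -x := neg_one_smul ℂ x

lemma t_pair (hk : 1 ≤ k ∧ k ≤ n - 1) {i : ℕ} (hi : Odd i) :
    t * (a ^ i + b ^ i) = 0 := by
  have h := t_pow_a n N hk i
  rw [hi.neg_one_pow, negsmul] at h
  rw [mul_add, h]
  exact neg_add_cancel _

lemma pair_t (hk : 1 ≤ k ∧ k ≤ n - 1) {i : ℕ} (hi : Odd i) :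
    (a ^ i + b ^ i) * t = 0 := by
  have h := pow_a_t n N hk i
  rw [hi.neg_one_pow, negsmul] at h
  rw [add_mul, h]
  exact neg_add_cancel _

lemma s_pair (hk : 1 ≤ k ∧ k ≤ n - 1) {i : ℕ} (hi : Odd i) :
    s * (a ^ i + b ^ i) = (a ^ i + b ^ i) * s := by
  have hab : Commute (yA n N k) (yA n N (k+1)) := ab_comm n N hk
  have key : ∀ j ∈ Finset.range i,
      b ^ j * (t - 1) * a ^ (i-1-j) + a ^ j * (1 - t) * b ^ (i-1-j)
        = a ^ j * b ^ (i-1-j) - b ^ j * a ^ (i-1-j) := by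
    intro j hj
    have hj' : j < i := Finset.mem_range.mp hj
    set m := i - 1 - j with hm
    have hcross : b ^ j * (t * a ^ m) = a ^ j * (t * b ^ m) := by
      have hpar : (-1 : ℂ) ^ m = (-1 : ℂ) ^ j := by
        have h1 : (-1 : ℂ) ^ m * (-1 : ℂ) ^ j = 1 := by
          rw [← pow_add]
          have : m + j = i - 1 := by omega
          rw [this]
          exact (Nat.Odd.sub_odd hi odd_one).neg_one_pow
        have h2 : (-1 : ℂ) ^ j * (-1 : ℂ) ^ j = 1 := by
          rw [← pow_add]
          exact Even.neg_one_pow ⟨j, rfl⟩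
        calc (-1 : ℂ) ^ m = (-1 : ℂ) ^ m * ((-1 : ℂ) ^ j * (-1 : ℂ) ^ j) := by
              rw [h2, mul_one]
          _ = ((-1 : ℂ) ^ m * (-1 : ℂ) ^ j) * (-1 : ℂ) ^ j := by ring
          _ = (-1 : ℂ) ^ j := by rw [h1, one_mul]
      calc b ^ j * (t * a ^ m)
          = b ^ j * (((-1 : ℂ) ^ m) • (t * b ^ m)) := by rw [t_pow_a n N hk m]
        _ = ((-1 : ℂ) ^ j) • (b ^ j * (t * b ^ m)) := by rw [mul_smul_comm, hpar]
        _ = (((-1 : ℂ) ^ j) • (b ^ j * t)) * b ^ m := by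
              rw [smul_mul_assoc, mul_assoc]
        _ = (a ^ j * t) * b ^ m := by rw [← pow_a_t n N hk j]
        _ = a ^ j * (t * b ^ m) := by rw [mul_assoc]
    have e1 : b ^ j * (t - 1) * a ^ m = b ^ j * (t * a ^ m) - b ^ j * a ^ m := by
      rw [mulsub, mul_one, submul, mul_assoc]
    have e2 : a ^ j * (1 - t) * b ^ m = a ^ j * b ^ m - a ^ j * (t * b ^ m) := by
      rw [mulsub, mul_one, submul, mul_assoc]
    rw [e1, e2, hcross]
    abel
  have hrefl : ∑ j ∈ Finset.range i, a ^ j * b ^ (i-1-j)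
      = ∑ j ∈ Finset.range i, b ^ j * a ^ (i-1-j) := by
    rw [← Finset.sum_range_reflect (fun j => b ^ j * a ^ (i-1-j)) i]
    refine Finset.sum_congr rfl fun j hj => ?_
    have hj' : j < i := Finset.mem_range.mp hj
    have h1 : i - 1 - (i - 1 - j) = j := by omega
    rw [h1]
    exact (hab.pow_pow j (i-1-j)).eq
  have hzero : (∑ j ∈ Finset.range i, b ^ j * (t - 1) * a ^ (i-1-j))
      + ∑ j ∈ Finset.range i, a ^ j * (1 - t) * b ^ (i-1-j) = 0 := by
    rw [← Finset.sum_add_distrib, Finset.sum_congr rfl key, Finset.sum_sub_distrib,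
      hrefl, sub_self]
  rw [mul_add, s_pow_a n N hk i, s_pow_b n N hk i, add_mul]
  have hre : (b ^ i * s + ∑ j ∈ Finset.range i, b ^ j * (t - 1) * a ^ (i-1-j))
      + (a ^ i * s + ∑ j ∈ Finset.range i, a ^ j * (1 - t) * b ^ (i-1-j))
      = (a ^ i * s + b ^ i * s)
      + ((∑ j ∈ Finset.range i, b ^ j * (t - 1) * a ^ (i-1-j))
        + ∑ j ∈ Finset.range i, a ^ j * (1 - t) * b ^ (i-1-j)) := by abel
  rw [hre, hzero, add_zero]

end PairK

section Main

variable {i : ℕ}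

lemma comm_yS (l : ℕ) (hl : 1 ≤ l ∧ l ≤ n) :
    Commute (yA n N l) (∑ k ∈ Finset.range n, yA n N (k + 1) ^ i) := by
  refine Commute.sum_right _ _ _ fun j hj => Commute.pow_right ?_ i
  exact q_yy n N l (j+1) ⟨hl.1, hl.2, by omega, by simpa using hj⟩

lemma comm_wS (m : ℕ) (hm : 1 ≤ m) :
    Commute (wA n N m) (∑ k ∈ Finset.range n, yA n N (k + 1) ^ i) := by
  refine Commute.sum_right _ _ _ fun j hj => Commute.pow_right ?_ i
  exact q_wy_comm n N m (j+1) ⟨hm, by omega, by simpa using hj⟩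

lemma sum_split (k : ℕ) (hk : 1 ≤ k ∧ k ≤ n - 1) :
    ∑ j ∈ Finset.range n, yA n N (j + 1) ^ i
      = (∑ j ∈ Finset.range n \ {k-1, k}, yA n N (j + 1) ^ i)
        + (yA n N k ^ i + yA n N (k+1) ^ i) := by
  have hsub : ({k-1, k} : Finset ℕ) ⊆ Finset.range n := by
    intro x hx
    simp only [Finset.mem_insert, Finset.mem_singleton] at hx
    simp only [Finset.mem_range]
    omega
  rw [← Finset.sum_sdiff (f := fun j => yA n N (j+1) ^ i) hsub]
  congr 1
  rw [Finset.sum_pair (by omega : k - 1 ≠ k)]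
  have h1 : k - 1 + 1 = k := by omega
  rw [h1]

lemma comm_tS (hi : Odd i) (k : ℕ) (hk : 1 ≤ k ∧ k ≤ n - 1) :
    tA n N k * (∑ j ∈ Finset.range n, yA n N (j + 1) ^ i)
      = (∑ j ∈ Finset.range n, yA n N (j + 1) ^ i) * tA n N k := by
  rw [sum_split n N k hk, mul_add, add_mul, t_pair n N hk hi, pair_t n N hk hi]
  congr 1
  refine (Commute.sum_right _ _ _ fun j hj => Commute.pow_right ?_ i).eq
  simp only [Finset.mem_sdiff, Finset.mem_range, Finset.mem_insert,
    Finset.mem_singleton] at hj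
  exact q_ty_comm n N k (j+1) ⟨hk.1, hk.2, by omega, by omega, by omega, by omega⟩

lemma comm_sS (hi : Odd i) (k : ℕ) (hk : 1 ≤ k ∧ k ≤ n - 1) :
    sA n N k * (∑ j ∈ Finset.range n, yA n N (j + 1) ^ i)
      = (∑ j ∈ Finset.range n, yA n N (j + 1) ^ i) * sA n N k := by
  rw [sum_split n N k hk, mul_add, add_mul, s_pair n N hk hi]
  congr 1
  refine (Commute.sum_right _ _ _ fun j hj => Commute.pow_right ?_ i).eq
  simp only [Finset.mem_sdiff, Finset.mem_range, Finset.mem_insert,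
    Finset.mem_singleton] at hj
  exact q_sy_comm n N k (j+1) ⟨hk.1, hk.2, by omega, by omega, by omega, by omega⟩

end Main
end ABH

theorem affine_odd_power_sum_central' (n : ℕ) (N : ℂ) (i : ℕ) (hi : Odd i) :
    (∑ k ∈ Finset.range n, yA n N (k + 1) ^ i) ∈
      Subalgebra.center ℂ (AffineBrauer n N) := by
  rw [Subalgebra.mem_center_iff]
  intro g
  obtain ⟨f, rfl⟩ := RingQuot.mkAlgHom_surjective ℂ (AffRel n N) g
  induction f using FreeAlgebra.induction with
  | grade0 r =>
      rw [AlgHom.commutes]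
      exact (Algebra.commutes r _)
  | grade1 x =>
      rcases x with (j | j) | (j | m)
      · have hx : (FreeAlgebra.ι ℂ ((Sum.inl (Sum.inl j)) : AIdx n)) = aS n ((j : ℕ) + 1) := by
          have hc : 1 ≤ (j : ℕ) + 1 ∧ (j : ℕ) + 1 ≤ n - 1 := ⟨by omega, by have := j.isLt; omega⟩
          simp [aS, hc]
        rw [hx]
        exact ABH.comm_sS n N hi ((j : ℕ) + 1) ⟨by omega, by have := j.isLt; omega⟩
      · have hx : (FreeAlgebra.ι ℂ ((Sum.inl (Sum.inr j)) : AIdx n)) = aT n ((j : ℕ) + 1) := by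
          have hc : 1 ≤ (j : ℕ) + 1 ∧ (j : ℕ) + 1 ≤ n - 1 := ⟨by omega, by have := j.isLt; omega⟩
          simp [aT, hc]
        rw [hx]
        exact ABH.comm_tS n N hi ((j : ℕ) + 1) ⟨by omega, by have := j.isLt; omega⟩
      · have hx : (FreeAlgebra.ι ℂ ((Sum.inr (Sum.inl j)) : AIdx n)) = aY n ((j : ℕ) + 1) := by
          have hc : 1 ≤ (j : ℕ) + 1 ∧ (j : ℕ) + 1 ≤ n := ⟨by omega, by have := j.isLt; omega⟩
          simp [aY, hc]
        rw [hx]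
        exact (ABH.comm_yS n N ((j : ℕ) + 1) ⟨by omega, by have := j.isLt; omega⟩).eq
      · have hx : (FreeAlgebra.ι ℂ ((Sum.inr (Sum.inr m)) : AIdx n)) = aW n N (m + 1) := by
          simp [aW]
        rw [hx]
        exact (ABH.comm_wS n N (m + 1) (by omega)).eq
  | mul p q ihp ihq =>
      rw [map_mul, mul_assoc, ihq, ← mul_assoc, ihp, mul_assoc]
  | add p q ihp ihq =>
      rw [map_add, add_mul, ihp, ihq, mul_add]



/-- For every odd positive integer `i`, the element
`y₁^i + ⋯ + yₙ^i` is central in the affine Brauer algebra `A(n,N)`. -/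
theorem affine_odd_power_sum_central (n : ℕ) (N : ℂ) (i : ℕ) (hi : Odd i) :
    (∑ k ∈ Finset.range n, yA n N (k + 1) ^ i) ∈
      Subalgebra.center ℂ (AffineBrauer n N) :=
  affine_odd_power_sum_central' n N i hi
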